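/- Fix an integer m ≥ 1 and a real λ with 1/2 < λ ≤ 1. For a positive integer n, let A be a subset chosen uniformly at random from F_{λ,n}, let X̄ = C(|A|, m), and let σ̄² = E[X̄²] − (E[X̄])². Then for every ε > 0 there exists n₀ such that for all n ≥ n₀: σ̄² ≤ (1 + ε) · n^{2m−1} / (m!)². -/

import Mathlib

open Finset

-- variance ≤ second moment about any point
lemma aux_var_le {α : Type*} (s : Finset α) (f : α → ℝ) (c : ℝ) (hs : 0 < (s.card : ℝ)) :
    (∑ a ∈ s, f a ^ 2) / s.card - ((∑ a ∈ s, f a) / s.card) ^ 2 ≤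
      (∑ a ∈ s, (f a - c) ^ 2) / s.card := by
  have key : ∑ a ∈ s, (f a - c) ^ 2
      = ∑ a ∈ s, f a ^ 2 - 2 * c * ∑ a ∈ s, f a + (s.card : ℝ) * c ^ 2 := by
    have e : ∀ a ∈ s, (f a - c)^2 = f a^2 - 2*c*f a + c^2 := fun a _ => by ring
    rw [Finset.sum_congr rfl e, Finset.sum_add_distrib, Finset.sum_sub_distrib,
      Finset.sum_const, nsmul_eq_mul, Finset.mul_sum]
  rw [key]
  have h2 : (∑ a ∈ s, f a ^ 2 - 2 * c * ∑ a ∈ s, f a + (s.card : ℝ) * c ^ 2) / s.card -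
      ((∑ a ∈ s, f a ^ 2) / s.card - ((∑ a ∈ s, f a) / s.card) ^ 2)
      = ((∑ a ∈ s, f a) / s.card - c) ^ 2 := by
    field_simp
    ring
  nlinarith [sq_nonneg ((∑ a ∈ s, f a) / (s.card : ℝ) - c)]

-- sum over all subsets of card function
lemma aux_card_sum (n : ℕ) (g : ℕ → ℝ) :
    ∑ A : Finset (Fin n), g A.card = ∑ k ∈ range (n + 1), (n.choose k : ℝ) * g k := by
  have h := Finset.sum_powerset_apply_card (x := (Finset.univ : Finset (Fin n))) g
  simpa [Finset.powerset_univ, Finset.card_univ, nsmul_eq_mul] using h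

lemma aux_sum1 (n : ℕ) :
    2 * ∑ k ∈ range (n + 1), (k : ℝ) * (n.choose k : ℝ) = (n:ℝ) * 2 ^ n := by
  induction n with
  | zero => simp
  | succ n ih =>
    clear ih
    have h : ∑ k ∈ range (n + 2), (k : ℝ) * ((n+1).choose k : ℝ)
        = ∑ k ∈ range (n + 1), ((k:ℝ) + 1) * (((n+1)).choose (k+1) : ℝ) := by
      rw [Finset.sum_range_succ' (fun k => (k : ℝ) * ((n+1).choose k : ℝ)) (n+1)]
      push_cast
      ring
    have h2 : ∀ k : ℕ, ((k:ℝ) + 1) * (((n+1)).choose (k+1) : ℝ) = ((n:ℝ)+1) * (n.choose k : ℝ) := by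
      intro k
      have := Nat.add_one_mul_choose_eq n k
      have : ((n+1) * n.choose k : ℕ) = ((n+1).choose (k+1) * (k+1) : ℕ) := by
        simpa [Nat.succ_eq_add_one] using this
      have := congrArg (fun x : ℕ => (x : ℝ)) this
      push_cast at this
      linarith
    rw [h, Finset.sum_congr rfl (fun k _ => h2 k), ← Finset.mul_sum]
    have : ∑ k ∈ range (n+1), (n.choose k : ℝ) = 2 ^ n := by
      have := Nat.sum_range_choose n
      have := congrArg (fun x : ℕ => (x : ℝ)) this
      push_cast at this
      simpa using this
    rw [this]
    push_cast
    ring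

lemma aux_sum2 (n : ℕ) :
    4 * ∑ k ∈ range (n + 1), (k : ℝ) * ((k:ℝ) - 1) * (n.choose k : ℝ)
      = n * ((n:ℝ) - 1) * 2 ^ n := by
  match n with
  | 0 => simp
  | 1 => simp [Finset.sum_range_succ]
  | (n+2) =>
    have h : ∑ k ∈ range (n + 3), (k : ℝ) * ((k:ℝ) - 1) * ((n+2).choose k : ℝ)
        = ∑ k ∈ range (n + 2), ((k:ℝ) + 1) * (k:ℝ) * (((n+2)).choose (k+1) : ℝ) := by
      rw [Finset.sum_range_succ' (fun k => (k : ℝ) * ((k:ℝ) - 1) * ((n+2).choose k : ℝ)) (n+2)]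
      norm_num
    have h2 : ∀ k : ℕ, ((k:ℝ) + 1) * (((n+2)).choose (k+1) : ℝ)
        = ((n:ℝ) + 2) * ((n+1).choose k : ℝ) := by
      intro k
      have h3 : ((n+2) * (n+1).choose k : ℕ) = ((n+2).choose (k+1) * (k+1) : ℕ) := by
        simpa [Nat.succ_eq_add_one] using Nat.add_one_mul_choose_eq (n+1) k
      have h4 := congrArg (fun x : ℕ => (x : ℝ)) h3
      push_cast at h4
      linarith
    have h5 : ∀ k ∈ range (n+2), ((k:ℝ) + 1) * (k:ℝ) * (((n+2)).choose (k+1) : ℝ)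
        = ((n:ℝ) + 2) * ((k:ℝ) * ((n+1).choose k : ℝ)) := by
      intro k _
      linear_combination (k:ℝ) * h2 k
    rw [h, Finset.sum_congr rfl h5, ← Finset.mul_sum]
    have h6 := aux_sum1 (n+1)
    push_cast at h6 ⊢
    linear_combination (2*((n:ℝ)+2)) * h6

lemma aux_meansq (n : ℕ) :
    ∑ k ∈ range (n + 1), ((n:ℝ) - 2 * (k:ℝ)) ^ 2 * (n.choose k : ℝ) = (n:ℝ) * 2 ^ n := by
  have e : ∀ k ∈ range (n+1), ((n:ℝ) - 2 * (k:ℝ)) ^ 2 * (n.choose k : ℝ)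
      = (n:ℝ)^2 * (n.choose k : ℝ) + ((4:ℝ) - 4*n) * ((k:ℝ) * (n.choose k : ℝ))
        + 4 * ((k:ℝ) * ((k:ℝ) - 1) * (n.choose k : ℝ)) := by
    intro k _; ring
  have step : ∑ k ∈ range (n + 1), ((n:ℝ) - 2 * (k:ℝ)) ^ 2 * (n.choose k : ℝ)
      = (n:ℝ)^2 * (∑ k ∈ range (n+1), (n.choose k : ℝ))
        + ((4:ℝ) - 4*n) * (∑ k ∈ range (n+1), (k:ℝ) * (n.choose k : ℝ))
        + 4 * (∑ k ∈ range (n+1), (k:ℝ) * ((k:ℝ) - 1) * (n.choose k : ℝ)) := by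
    rw [Finset.mul_sum, Finset.mul_sum, Finset.mul_sum, ← Finset.sum_add_distrib,
      ← Finset.sum_add_distrib]
    exact Finset.sum_congr rfl e
  have h1 := aux_sum1 n
  have h2 := aux_sum2 n
  have h0 : ∑ k ∈ range (n+1), (n.choose k : ℝ) = 2 ^ n := by
    have := congrArg (fun x : ℕ => (x : ℝ)) (Nat.sum_range_choose n)
    push_cast at this
    simpa using this
  linear_combination step + ((2:ℝ) - 2*(n:ℝ)) * h1 + h2 + (n:ℝ)^2 * h0

lemma aux_telescope (m' : ℕ) : ∀ a b : ℕ, a ≤ b →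
    a.choose (m'+1) + (∑ j ∈ Ico a b, j.choose m') = b.choose (m'+1) := by
  intro a b hab
  induction b, hab using Nat.le_induction with
  | base => simp
  | succ b hab ih =>
    rw [Finset.sum_Ico_succ_top hab, ← add_assoc, ih, Nat.choose_succ_succ]
    ring

lemma aux_choose_abs (m' M a b : ℕ) (haM : a ≤ M) (hbM : b ≤ M) :
    |(b.choose (m'+1) : ℝ) - (a.choose (m'+1) : ℝ)|
      ≤ |(b:ℝ) - (a:ℝ)| * (M.choose m' : ℝ) := by
  have key : ∀ a b : ℕ, a ≤ b → b ≤ M →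
      (b.choose (m'+1) : ℝ) - (a.choose (m'+1) : ℝ) ≤ ((b:ℝ) - (a:ℝ)) * (M.choose m' : ℝ) := by
    intro a b hab hbM
    have ht := aux_telescope m' a b hab
    have hc : (b.choose (m'+1) : ℝ) - (a.choose (m'+1) : ℝ)
        = ∑ j ∈ Ico a b, (j.choose m' : ℝ) := by
      have := congrArg (fun x : ℕ => (x : ℝ)) ht
      push_cast at this
      linarith
    rw [hc]
    have hb : ∑ j ∈ Ico a b, (j.choose m' : ℝ) ≤ ∑ j ∈ Ico a b, (M.choose m' : ℝ) := by
      apply Finset.sum_le_sum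
      intro j hj
      exact_mod_cast Nat.choose_le_choose m' (le_of_lt (lt_of_lt_of_le (Finset.mem_Ico.mp hj).2 hbM))
    rw [Finset.sum_const, Nat.card_Ico, nsmul_eq_mul] at hb
    have : ((b - a : ℕ) : ℝ) = (b:ℝ) - a := by
      rw [Nat.cast_sub hab]
    rw [this] at hb
    exact hb
  have hmono : ∀ a b : ℕ, a ≤ b → (a.choose (m'+1) : ℝ) ≤ (b.choose (m'+1) : ℝ) := by
    intro a b hab
    exact_mod_cast Nat.choose_le_choose (m'+1) hab
  rcases le_total a b with h | h
  · rw [abs_of_nonneg (by linarith [hmono a b h]), abs_of_nonneg (by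
      have : (a:ℝ) ≤ b := by exact_mod_cast h
      linarith)]
    exact key a b h hbM
  · rw [abs_of_nonpos (by linarith [hmono b a h]), abs_of_nonpos (by
      have : (b:ℝ) ≤ a := by exact_mod_cast h
      linarith)]
    have := key b a h haM
    linarith

lemma aux_chain (n s : ℕ) (γ : ℝ) (hγ0 : 0 ≤ γ)
    (hs : ∀ j, s ≤ j → j < n → ((n - j : ℕ) : ℝ) ≤ γ * ((j:ℝ) + 1)) :
    ∀ i : ℕ, s + i ≤ n → (n.choose (s+i) : ℝ) ≤ γ ^ i * (n.choose s : ℝ) := by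
  intro i
  induction i with
  | zero => simp
  | succ i ih =>
    intro hle
    have hle' : s + i ≤ n := by omega
    have ih' := ih hle'
    have hid := Nat.choose_succ_right_eq n (s+i)
    have hidR := congrArg (fun x : ℕ => (x : ℝ)) hid
    push_cast at hidR
    have hpos : (0:ℝ) < (s:ℝ) + i + 1 := by positivity
    have hstep : (n.choose (s+i+1) : ℝ) * ((s:ℝ) + i + 1)
        ≤ (γ * ((s:ℝ) + i + 1)) * (n.choose (s+i) : ℝ) := by
      have hb := hs (s+i) (by omega) (by omega)
      have hnn : (0:ℝ) ≤ (n.choose (s+i) : ℝ) := by positivity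
      calc (n.choose (s+i+1) : ℝ) * ((s:ℝ) + i + 1)
          = (n.choose (s+i) : ℝ) * ((n - (s+i) : ℕ) : ℝ) := by
            push_cast
            linear_combination hidR
        _ ≤ (n.choose (s+i) : ℝ) * (γ * ((s:ℝ) + i + 1)) := by
            apply mul_le_mul_of_nonneg_left _ hnn
            have hb' : γ * ((s:ℝ) + i + 1) = γ * (((s+i : ℕ):ℝ) + 1) := by push_cast; ring
            rw [hb']
            exact hb
        _ = (γ * ((s:ℝ) + i + 1)) * (n.choose (s+i) : ℝ) := by ring
    have h2 : (n.choose (s+i+1) : ℝ) ≤ γ * (n.choose (s+i) : ℝ) := by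
      have := (mul_le_mul_iff_of_pos_right hpos).mp (by linarith [hstep] : (n.choose (s+i+1) : ℝ) * ((s:ℝ) + i + 1) ≤ (γ * (n.choose (s+i) : ℝ)) * ((s:ℝ) + i + 1))
      exact this
    have : γ * (n.choose (s+i) : ℝ) ≤ γ * (γ ^ i * (n.choose s : ℝ)) :=
      mul_le_mul_of_nonneg_left ih' hγ0
    calc (n.choose (s+(i+1)) : ℝ) = (n.choose (s+i+1) : ℝ) := by ring_nf
      _ ≤ γ * (n.choose (s+i) : ℝ) := h2
      _ ≤ γ * (γ ^ i * (n.choose s : ℝ)) := this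
      _ = γ ^ (i+1) * (n.choose s : ℝ) := by ring

lemma aux_bernoulli (x : ℝ) (hx : 0 ≤ x) : ∀ k : ℕ, (1+x)^k * (1 - k*x) ≤ 1 := by
  intro k
  induction k with
  | zero => simp
  | succ k ih =>
    have h1 : (0:ℝ) ≤ (1+x)^k := by positivity
    have h2 : (1+x)^(k+1) * (1 - (k+1)*x) ≤ (1+x)^k * (1 - k*x) := by
      have : (1+x) * (1 - ((k:ℝ)+1)*x) ≤ 1 - k*x := by nlinarith [sq_nonneg x, Nat.cast_nonneg (α := ℝ) k]
      calc (1+x)^(k+1) * (1 - ((k:ℝ)+1)*x) = (1+x)^k * ((1+x) * (1 - ((k:ℝ)+1)*x)) := by ring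
        _ ≤ (1+x)^k * (1 - k*x) := by
            apply mul_le_mul_of_nonneg_left _ h1
            exact this
    push_cast
    push_cast at ih
    linarith

lemma aux_msq (m : ℕ) (hm : 1 ≤ m) : ((m:ℝ))^2 ≤ 4^(m-1) := by
  induction m, hm using Nat.le_induction with
  | base => norm_num
  | succ m hm ih =>
    have h1 : (1:ℝ) ≤ (m:ℝ) := by exact_mod_cast hm
    have he : m + 1 - 1 = (m - 1) + 1 := by omega
    rw [he, pow_succ (4:ℝ) (m-1)]
    push_cast
    nlinarith [ih]

/-- `Fam n l` is the family `F_{λ,n}` of all subsets of `{1,…,n}` of size at most `λ·n`. -/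
noncomputable def Fam (n : ℕ) (l : ℝ) : Finset (Finset (Fin n)) :=
  Finset.univ.filter (fun A => (A.card : ℝ) ≤ l * n)

lemma aux_fam_card (n : ℕ) (l : ℝ) (hl0 : 1/2 ≤ l) :
    (2:ℝ)^n ≤ 2 * ((Fam n l).card : ℝ) := by
  classical
  set P : Finset (Fin n) → Prop := fun A => (A.card : ℝ) ≤ l * n with hP
  have hinj : ((Finset.univ : Finset (Finset (Fin n))).filter (fun A => ¬ P A)).card
      ≤ (Fam n l).card := by
    apply Finset.card_le_card_of_injOn (fun A => Aᶜ)
    · intro A hA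
      rw [Finset.mem_coe, Finset.mem_filter] at hA
      have hA' : l * n < (A.card : ℝ) := by
        have := hA.2
        simp only [hP, not_le] at this
        exact this
      rw [Finset.mem_coe, Fam, Finset.mem_filter]
      refine ⟨Finset.mem_univ _, ?_⟩
      have hcc : Aᶜ.card = n - A.card := by
        rw [Finset.card_compl, Fintype.card_fin]
      have hcard_le : A.card ≤ n := by
        simpa using Finset.card_le_card (Finset.subset_univ A)
      rw [hcc, Nat.cast_sub hcard_le]
      have h1 : (A.card : ℝ) ≤ n := by exact_mod_cast hcard_le
      have h2 : (0:ℝ) ≤ n := Nat.cast_nonneg n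
      nlinarith
    · intro A _ B _ h
      exact compl_injective h
  have hsplit := Finset.card_filter_add_card_filter_not
    (s := (Finset.univ : Finset (Finset (Fin n)))) (p := P)
  have huniv : (Finset.univ : Finset (Finset (Fin n))).card = 2^n := by
    rw [Finset.card_univ, Fintype.card_finset, Fintype.card_fin]
  have hFam : (Fam n l).card = ((Finset.univ : Finset (Finset (Fin n))).filter P).card := rfl
  have : 2^n ≤ 2 * (Fam n l).card := by omega
  exact_mod_cast this

lemma aux_pt (n k k₀ : ℕ) (h1 : 2*k₀ ≤ n) (h2 : n ≤ 2*k₀+1) :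
    ((k:ℝ) - (k₀:ℝ))^2 ≤ (0.275:ℝ)*((n:ℝ) - 2*(k:ℝ))^2 + 3 := by
  have h1r : 2*(k₀:ℝ) ≤ (n:ℝ) := by exact_mod_cast h1
  have h2r : (n:ℝ) ≤ 2*(k₀:ℝ)+1 := by exact_mod_cast h2
  have hb0 : (0:ℝ) ≤ (n:ℝ) - 2*(k₀:ℝ) := by linarith
  have hb1 : (0:ℝ) ≤ 1 - ((n:ℝ) - 2*(k₀:ℝ)) := by linarith
  nlinarith [sq_nonneg (((n:ℝ) - 2*(k:ℝ)) + 10*((n:ℝ) - 2*(k₀:ℝ))), mul_nonneg hb0 hb1]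

set_option maxHeartbeats 1000000 in
theorem stmt4 (m : ℕ) (hm : 1 ≤ m) (l : ℝ) (hl0 : 1 / 2 < l) (hl : l ≤ 1)
    (ε : ℝ) (hε : 0 < ε) :
    ∃ n₀ : ℕ, ∀ n : ℕ, n₀ ≤ n → 0 < n →
      (∑ A ∈ Fam n l, ((A.card.choose m : ℝ)) ^ 2) / ((Fam n l).card : ℝ) -
        ((∑ A ∈ Fam n l, ((A.card.choose m : ℝ))) / ((Fam n l).card : ℝ)) ^ 2 ≤
      (1 + ε) * (n : ℝ) ^ (2 * m - 1) / ((m.factorial : ℝ)) ^ 2 := by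
  classical
  have hm1 : (1:ℝ) ≤ (m:ℝ) := by exact_mod_cast hm
  have hmpos : (0:ℝ) < (m:ℝ) := by linarith
  set δ : ℝ := 1/(32*(m:ℝ)) with hδdef
  have hδ0 : 0 < δ := by rw [hδdef]; positivity
  have hδm : δ * (32*(m:ℝ)) = 1 := by rw [hδdef]; field_simp
  have hδle : δ ≤ 1/32 := by
    rw [hδdef, div_le_div_iff₀ (by positivity) (by norm_num)]
    nlinarith
  set γ : ℝ := (2-δ)/(2+δ) with hγdef
  have hγ0 : 0 < γ := by rw [hγdef]; apply div_pos <;> linarith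
  have hγ1 : γ < 1 := by rw [hγdef, div_lt_one (by linarith)]; linarith
  set ρ : ℝ := γ ^ ((δ:ℝ)/2) with hρdef
  have hρ0 : 0 < ρ := Real.rpow_pos_of_pos hγ0 _
  have hρ1 : ρ < 1 := Real.rpow_lt_one hγ0.le hγ1 (by positivity)
  have hfact0 : (0:ℝ) < (m.factorial : ℝ) := by exact_mod_cast m.factorial_pos
  have htends : Filter.Tendsto (fun n : ℕ => ((n:ℝ)^(2*m+1)) * ρ^n) Filter.atTop (nhds 0) :=
    tendsto_pow_const_mul_const_pow_of_lt_one (2*m+1) hρ0.le hρ1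
  have hevent : ∀ᶠ n : ℕ in Filter.atTop, ((n:ℝ)^(2*m+1)) * ρ^n < ε/(4*(m.factorial:ℝ)^2) :=
    htends.eventually (gt_mem_nhds (div_pos hε (by nlinarith [hfact0])))
  obtain ⟨n₁, hn₁⟩ := Filter.eventually_atTop.mp hevent
  refine ⟨max n₁ (128*m+16), fun n hn hnpos => ?_⟩
  have hnn₁ : n₁ ≤ n := le_trans (le_max_left _ _) hn
  have hn128 : 128*m+16 ≤ n := le_trans (le_max_right _ _) hn
  have hnR : (128*(m:ℝ)+16) ≤ (n:ℝ) := by exact_mod_cast hn128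
  have hnnn : (0:ℝ) ≤ (n:ℝ) := Nat.cast_nonneg n
  have hn1R : (1:ℝ) ≤ (n:ℝ) := by exact_mod_cast hnpos
  have hn16 : (16:ℝ) ≤ (n:ℝ) := by nlinarith
  have hδn : (4:ℝ) ≤ δ * n := by nlinarith
  -- basic objects
  set F : Finset (Finset (Fin n)) := Fam n l with hFdef
  have hN2 : (2:ℝ)^n ≤ 2*((F.card : ℕ):ℝ) := aux_fam_card n l hl0.le
  have h2npos : (0:ℝ) < 2^n := by positivity
  have hNpos : (0:ℝ) < ((F.card : ℕ):ℝ) := by nlinarith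
  set k₀ : ℕ := n/2 with hk₀def
  set M : ℕ := ⌊(1/2+δ)*(n:ℝ)⌋₊ with hMdef
  set s : ℕ := ⌈(1/2+δ/4)*(n:ℝ)⌉₊ with hsdef
  set c : ℝ := (k₀.choose m : ℝ) with hcdef
  set L : ℝ := (M.choose (m-1) : ℝ) with hLdef
  have hLnn : (0:ℝ) ≤ L := by rw [hLdef]; positivity
  have hk₀n : (k₀:ℝ) ≤ (n:ℝ)/2 := by rw [hk₀def]; exact_mod_cast Nat.cast_div_le
  have hk₀M : k₀ ≤ M := by
    apply Nat.le_floor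
    calc (k₀:ℝ) ≤ (n:ℝ)/2 := hk₀n
      _ ≤ (1/2+δ)*(n:ℝ) := by nlinarith
  have hMr : (M:ℝ) ≤ (1/2+δ)*(n:ℝ) := Nat.floor_le (by positivity)
  have hMlt : (1/2+δ)*(n:ℝ) < (M:ℝ) + 1 := Nat.lt_floor_add_one _
  have hsge : (1/2+δ/4)*(n:ℝ) ≤ (s:ℝ) := Nat.le_ceil _
  have hsle : (s:ℝ) ≤ (1/2+δ/4)*(n:ℝ) + 1 := (Nat.ceil_lt_add_one (by positivity)).le
  have hMn : M ≤ n := by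
    have h1 : (1/2+δ)*(n:ℝ) ≤ ((n:ℕ):ℝ) := by push_cast; nlinarith
    calc M ≤ ⌊((n:ℕ):ℝ)⌋₊ := Nat.floor_mono h1
      _ = n := Nat.floor_natCast n
  have hk₀nn : k₀ ≤ n := by omega
  have hsM1 : (s:ℝ) ≤ (M:ℝ)+1 := by nlinarith
  have hsMnat : s ≤ M+1 := by exact_mod_cast hsM1
  -- variance bound by second moment about c
  have hvar : (∑ A ∈ F, ((A.card.choose m : ℝ)) ^ 2) / ((F.card : ℕ):ℝ) -
        ((∑ A ∈ F, ((A.card.choose m : ℝ))) / ((F.card : ℕ):ℝ)) ^ 2 ≤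
      (∑ A ∈ F, ((A.card.choose m : ℝ) - c) ^ 2) / ((F.card : ℕ):ℝ) :=
    aux_var_le F (fun A => (A.card.choose m : ℝ)) c hNpos
  set B : Finset (Finset (Fin n)) := F.filter (fun A => A.card ≤ M) with hBdef
  set T : Finset (Finset (Fin n)) := F.filter (fun A => ¬ A.card ≤ M) with hTdef
  have hsplit : ∑ A ∈ F, ((A.card.choose m : ℝ) - c) ^ 2
      = ∑ A ∈ B, ((A.card.choose m : ℝ) - c) ^ 2 + ∑ A ∈ T, ((A.card.choose m : ℝ) - c) ^ 2 :=
    (Finset.sum_filter_add_sum_filter_not F _ _).symm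
  have hmm' : m - 1 + 1 = m := by omega
  -- bulk pointwise
  have hbulk1 : ∑ A ∈ B, ((A.card.choose m : ℝ) - c) ^ 2
      ≤ ∑ A ∈ B, L^2 * ((A.card:ℝ) - (k₀:ℝ))^2 := by
    apply Finset.sum_le_sum
    intro A hA
    have hAM : A.card ≤ M := (Finset.mem_filter.mp hA).2
    have habs := aux_choose_abs (m-1) M k₀ A.card hk₀M hAM
    rw [hmm'] at habs
    have h2 : ((A.card.choose m : ℝ) - c)^2 ≤ (|(A.card:ℝ) - (k₀:ℝ)| * L)^2 := by
      rw [← sq_abs]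
      exact pow_le_pow_left₀ (abs_nonneg _) habs 2
    have h3 : (|(A.card:ℝ) - (k₀:ℝ)| * L)^2 = L^2 * ((A.card:ℝ) - (k₀:ℝ))^2 := by
      rw [mul_pow, sq_abs]; ring
    linarith
  have hbulk2 : ∑ A ∈ B, L^2 * ((A.card:ℝ) - (k₀:ℝ))^2
      ≤ L^2 * ∑ A : Finset (Fin n), ((A.card:ℝ) - (k₀:ℝ))^2 := by
    rw [← Finset.mul_sum]
    apply mul_le_mul_of_nonneg_left _ (by positivity : (0:ℝ) ≤ L^2)
    apply Finset.sum_le_sum_of_subset_of_nonneg (Finset.subset_univ _)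
    intro i _ _
    exact sq_nonneg _
  have hsumchoose : ∑ k ∈ Finset.range (n+1), (n.choose k : ℝ) = 2^n := by
    have := congrArg (fun x : ℕ => (x : ℝ)) (Nat.sum_range_choose n)
    push_cast at this
    simpa using this
  have hW : ∑ A : Finset (Fin n), ((A.card:ℝ) - (k₀:ℝ))^2 ≤ ((0.275:ℝ)*(n:ℝ) + 3)*2^n := by
    rw [aux_card_sum n (fun k => ((k:ℝ) - (k₀:ℝ))^2)]
    have hpt : ∀ k ∈ Finset.range (n+1), (n.choose k : ℝ) * ((k:ℝ) - (k₀:ℝ))^2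
        ≤ (n.choose k : ℝ) * ((0.275:ℝ)*((n:ℝ) - 2*(k:ℝ))^2 + 3) := by
      intro k _
      apply mul_le_mul_of_nonneg_left _ (Nat.cast_nonneg _)
      exact aux_pt n k k₀ (by omega) (by omega)
    calc ∑ k ∈ Finset.range (n+1), (n.choose k : ℝ) * ((k:ℝ) - (k₀:ℝ))^2
        ≤ ∑ k ∈ Finset.range (n+1), (n.choose k : ℝ) * ((0.275:ℝ)*((n:ℝ) - 2*(k:ℝ))^2 + 3) :=
          Finset.sum_le_sum hpt
      _ = (0.275:ℝ) * (∑ k ∈ Finset.range (n+1), ((n:ℝ) - 2*(k:ℝ))^2 * (n.choose k : ℝ))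
            + 3 * ∑ k ∈ Finset.range (n+1), (n.choose k : ℝ) := by
          rw [Finset.mul_sum, Finset.mul_sum, ← Finset.sum_add_distrib]
          exact Finset.sum_congr rfl (fun k _ => by ring)
      _ = (0.275:ℝ)*((n:ℝ)*2^n) + 3*2^n := by rw [aux_meansq n, hsumchoose]
      _ = ((0.275:ℝ)*(n:ℝ) + 3)*2^n := by ring
  have hbulkN : ∑ A ∈ B, ((A.card.choose m : ℝ) - c) ^ 2
      ≤ (L^2 * ((0.55:ℝ)*(n:ℝ)+6)) * ((F.card : ℕ):ℝ) := by
    have hx := hbulk1.trans (hbulk2.trans (mul_le_mul_of_nonneg_left hW (sq_nonneg L)))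
    have hy : L^2 * (((0.275:ℝ)*(n:ℝ) + 3)*2^n) ≤ L^2 * (((0.275:ℝ)*(n:ℝ) + 3)*(2*((F.card : ℕ):ℝ))) := by
      apply mul_le_mul_of_nonneg_left _ (sq_nonneg L)
      apply mul_le_mul_of_nonneg_left hN2 (by positivity : (0:ℝ) ≤ (0.275:ℝ)*(n:ℝ)+3)
    calc ∑ A ∈ B, ((A.card.choose m : ℝ) - c) ^ 2 ≤ L^2 * (((0.275:ℝ)*(n:ℝ) + 3)*2^n) := hx
      _ ≤ L^2 * (((0.275:ℝ)*(n:ℝ) + 3)*(2*((F.card : ℕ):ℝ))) := hy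
      _ = (L^2 * ((0.55:ℝ)*(n:ℝ)+6)) * ((F.card : ℕ):ℝ) := by ring
  -- bound on L and the bulk coefficient
  have hfacm : (m.factorial : ℝ) = (m:ℝ) * ((m-1).factorial : ℝ) := by
    have : m.factorial = m * (m-1).factorial := by
      conv_lhs => rw [← hmm']
      rw [Nat.factorial_succ, hmm']
    exact_mod_cast this
  have hLb : L ≤ (M:ℝ)^(m-1) * (m:ℝ) / (m.factorial : ℝ) := by
    have h1 : (M.choose (m-1) : ℝ) ≤ (M:ℝ)^(m-1)/(((m-1).factorial : ℕ):ℝ) :=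
      Nat.choose_le_pow_div (m-1) M
    rw [hLdef]
    have hf1 : (0:ℝ) < (((m-1).factorial : ℕ):ℝ) := by exact_mod_cast (m-1).factorial_pos
    have heq : (M:ℝ)^(m-1)/(((m-1).factorial : ℕ):ℝ) = (M:ℝ)^(m-1)*(m:ℝ)/(m.factorial : ℝ) := by
      rw [hfacm]
      field_simp
    exact h1.trans (le_of_eq heq)
  -- bulk coefficient bound
  have hcoef : (m:ℝ)^2 * ((1:ℝ)/2+δ)^(2*(m-1)) ≤ 8/7 := by
    have h4 : ((1:ℝ)/2+δ)^(2*(m-1)) = ((1:ℝ)/4)^(m-1) * (1+2*δ)^(2*(m-1)) := by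
      have e : (1:ℝ)/2+δ = (1/2)*(1+2*δ) := by ring
      rw [e, mul_pow, pow_mul]
      norm_num
    have hkx : ((2*(m-1):ℕ):ℝ) * (2*δ) ≤ 1/8 := by
      have hc : ((2*(m-1):ℕ):ℝ) = 2*((m:ℝ)-1) := by
        rw [Nat.cast_mul, Nat.cast_sub hm]
        push_cast
        ring
      rw [hc]
      nlinarith only [hδm, hδ0, hm1]
    have hq : (1+2*δ)^(2*(m-1)) ≤ 8/7 := by
      have hb := aux_bernoulli (2*δ) (by linarith) (2*(m-1))
      have hp : (0:ℝ) < (1+2*δ)^(2*(m-1)) := by positivity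
      nlinarith only [hb, mul_le_mul_of_nonneg_left hkx hp.le, hp]
    have hmsq := aux_msq m hm
    have hone : (4:ℝ)^(m-1) * ((1:ℝ)/4)^(m-1) = 1 := by
      rw [← mul_pow]; norm_num
    have ht3 : (m:ℝ)^2 * ((1:ℝ)/4)^(m-1) ≤ 1 := by
      have := mul_le_mul_of_nonneg_right hmsq (by positivity : (0:ℝ) ≤ ((1:ℝ)/4)^(m-1))
      linarith
    calc (m:ℝ)^2 * ((1:ℝ)/2+δ)^(2*(m-1))
        = ((m:ℝ)^2*((1:ℝ)/4)^(m-1)) * (1+2*δ)^(2*(m-1)) := by rw [h4]; ring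
      _ ≤ 1 * (8/7) := mul_le_mul ht3 hq (by positivity) one_pos.le
      _ = 8/7 := by norm_num
  have hL2 : L^2 ≤ (m:ℝ)^2 * (((1/2+δ)*(n:ℝ))^(m-1))^2 / (m.factorial:ℝ)^2 := by
    calc L^2 ≤ ((M:ℝ)^(m-1)*(m:ℝ)/(m.factorial:ℝ))^2 := pow_le_pow_left₀ hLnn hLb 2
      _ = (m:ℝ)^2 * ((M:ℝ)^(m-1))^2/(m.factorial:ℝ)^2 := by field_simp
      _ ≤ (m:ℝ)^2 * (((1/2+δ)*(n:ℝ))^(m-1))^2/(m.factorial:ℝ)^2 := by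
          gcongr
  have hsplitpow : (((1/2+δ)*(n:ℝ))^(m-1))^2 = ((1:ℝ)/2+δ)^(2*(m-1)) * ((n:ℝ)^(m-1))^2 := by
    calc (((1/2+δ)*(n:ℝ))^(m-1))^2 = (((1:ℝ)/2+δ)^(m-1))^2 * ((n:ℝ)^(m-1))^2 := by
          rw [mul_pow, mul_pow]
      _ = ((1:ℝ)/2+δ)^(2*(m-1)) * ((n:ℝ)^(m-1))^2 := by
          rw [← pow_mul, mul_comm (m-1) 2]
  have hlast : (8:ℝ)/7*((0.55:ℝ)*(n:ℝ)+6) ≤ (n:ℝ) := by nlinarith only [hnR, hm1]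
  have hpow21 : ((n:ℝ)^(m-1))^2 * (n:ℝ) = (n:ℝ)^(2*m-1) := by
    rw [← pow_mul, ← pow_succ]
    congr 1
    omega
  have hfac2 : (0:ℝ) < (m.factorial:ℝ)^2 := by positivity
  have hbulkFinal : L^2*((0.55:ℝ)*(n:ℝ)+6) ≤ (n:ℝ)^(2*m-1)/(m.factorial:ℝ)^2 := by
    have hstep1 : L^2*((0.55:ℝ)*(n:ℝ)+6)
        ≤ ((m:ℝ)^2*((1:ℝ)/2+δ)^(2*(m-1))) * (((n:ℝ)^(m-1))^2*((0.55:ℝ)*(n:ℝ)+6))/(m.factorial:ℝ)^2 := by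
      calc L^2*((0.55:ℝ)*(n:ℝ)+6)
          ≤ ((m:ℝ)^2 * (((1/2+δ)*(n:ℝ))^(m-1))^2/(m.factorial:ℝ)^2)*((0.55:ℝ)*(n:ℝ)+6) :=
            mul_le_mul_of_nonneg_right hL2 (by positivity)
        _ = ((m:ℝ)^2*((1:ℝ)/2+δ)^(2*(m-1))) * (((n:ℝ)^(m-1))^2*((0.55:ℝ)*(n:ℝ)+6))/(m.factorial:ℝ)^2 := by
            rw [hsplitpow]; ring
    have hstep2 : ((m:ℝ)^2*((1:ℝ)/2+δ)^(2*(m-1))) * (((n:ℝ)^(m-1))^2*((0.55:ℝ)*(n:ℝ)+6))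
        ≤ ((8:ℝ)/7) * (((n:ℝ)^(m-1))^2*((0.55:ℝ)*(n:ℝ)+6)) :=
      mul_le_mul_of_nonneg_right hcoef (by positivity)
    have hstep3 : ((8:ℝ)/7) * (((n:ℝ)^(m-1))^2*((0.55:ℝ)*(n:ℝ)+6)) ≤ ((n:ℝ)^(m-1))^2 * (n:ℝ) := by
      nlinarith only [mul_le_mul_of_nonneg_left hlast (sq_nonneg ((n:ℝ)^(m-1)))]
    calc L^2*((0.55:ℝ)*(n:ℝ)+6) ≤ _ := hstep1
      _ ≤ ((8:ℝ)/7) * (((n:ℝ)^(m-1))^2*((0.55:ℝ)*(n:ℝ)+6))/(m.factorial:ℝ)^2 :=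
          (div_le_div_iff_of_pos_right hfac2).mpr hstep2
      _ ≤ (((n:ℝ)^(m-1))^2 * (n:ℝ))/(m.factorial:ℝ)^2 := (div_le_div_iff_of_pos_right hfac2).mpr hstep3
      _ = (n:ℝ)^(2*m-1)/(m.factorial:ℝ)^2 := by rw [hpow21]
  -- tail: pointwise bound
  have hfb : ∀ k : ℕ, k ≤ n → (k.choose m : ℝ) ≤ (n:ℝ)^m := by
    intro k hk
    calc (k.choose m : ℝ) ≤ (n.choose m : ℝ) := by exact_mod_cast Nat.choose_le_choose m hk
      _ ≤ (n:ℝ)^m := by exact_mod_cast Nat.choose_le_pow n m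
  have htailpt : ∀ A ∈ T, ((A.card.choose m : ℝ) - c)^2 ≤ ((n:ℝ)^m)^2 := by
    intro A _
    have hcard : A.card ≤ n := by
      have := Finset.card_le_card (Finset.subset_univ A)
      simpa using this
    have h1 := hfb A.card hcard
    have h2 := hfb k₀ hk₀nn
    have h1' : (0:ℝ) ≤ (A.card.choose m : ℝ) := Nat.cast_nonneg _
    have h2' : (0:ℝ) ≤ c := by rw [hcdef]; exact Nat.cast_nonneg _
    rw [hcdef] at *
    apply sq_le_sq' <;> nlinarith only [h1, h2, h1', h2']
  -- tail: count bound
  have hchoose2n : (n.choose s : ℝ) ≤ 2^n := by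
    rcases le_or_gt s n with h | h
    · have h1 : n.choose s ≤ ∑ k ∈ Finset.range (n+1), n.choose k :=
        Finset.single_le_sum (f := fun k => n.choose k) (fun i _ => Nat.zero_le _)
          (Finset.mem_range.mpr (by omega))
      have h2 : (n.choose s : ℝ) ≤ ∑ k ∈ Finset.range (n+1), (n.choose k : ℝ) := by
        rw [← Nat.cast_sum]
        exact_mod_cast h1
      rw [hsumchoose] at h2
      exact h2
    · rw [Nat.choose_eq_zero_of_lt h]
      have h0 : (0:ℝ) ≤ 2^n := by positivity
      simpa using h0
  have hkey : ∀ k ∈ Finset.range (n+1), M < k → (n.choose k : ℝ) ≤ ρ^n * 2^n := by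
    intro k hkr hMk
    have hkn : k ≤ n := by
      have := Finset.mem_range.mp hkr
      omega
    have hsk : s ≤ k := by omega
    obtain ⟨i, rfl⟩ : ∃ i, k = s + i := ⟨k - s, by omega⟩
    have hchain : (n.choose (s+i) : ℝ) ≤ γ^i * (n.choose s : ℝ) := by
      apply aux_chain n s γ hγ0.le _ i (by omega)
      intro j hj1 hj2
      have hjn : ((n - j : ℕ):ℝ) = (n:ℝ) - (j:ℝ) := by
        rw [Nat.cast_sub (by omega)]
      rw [hjn]
      have hjs : (s:ℝ) ≤ (j:ℝ) := by exact_mod_cast hj1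
      have hgam : γ * ((1/2+δ/4)*(n:ℝ)) = (1/2-δ/4)*(n:ℝ) := by
        rw [hγdef]
        field_simp
        ring
      have hmono : γ * ((1/2+δ/4)*(n:ℝ)) ≤ γ * ((j:ℝ)+1) := by
        apply mul_le_mul_of_nonneg_left _ hγ0.le
        linarith [hsge]
      linarith [hsge]
    have hi : (δ/2)*(n:ℝ) ≤ ((i:ℕ):ℝ) := by
      have hMk' : (M:ℝ)+1 ≤ (s:ℝ)+(i:ℝ) := by
        have : M+1 ≤ s+i := by omega
        exact_mod_cast this
      nlinarith only [hsle, hδn, hMlt, hMk', hδ0, hnnn]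
    have hrg : γ^i ≤ ρ^n := by
      have e1 : (γ:ℝ)^i = γ ^ ((i:ℕ):ℝ) := (Real.rpow_natCast γ i).symm
      have e2 : ρ^n = γ ^ ((δ/2)*(n:ℝ)) := by
        rw [hρdef, ← Real.rpow_natCast (γ ^ ((δ:ℝ)/2)) n, ← Real.rpow_mul hγ0.le]
      rw [e1, e2]
      exact Real.rpow_le_rpow_of_exponent_ge hγ0 hγ1.le hi
    calc (n.choose (s+i) : ℝ) ≤ γ^i * (n.choose s : ℝ) := hchain
      _ ≤ ρ^n * 2^n := by
          apply mul_le_mul hrg hchoose2n (Nat.cast_nonneg _) (pow_nonneg hρ0.le n)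
  have hTcount : ((T.card : ℕ):ℝ) ≤ ((n:ℝ)+1) * (ρ^n * 2^n) := by
    have hsub : T ⊆ Finset.univ.filter (fun A => M < A.card) := by
      intro A hA
      rw [hTdef, Finset.mem_filter] at hA
      rw [Finset.mem_filter]
      exact ⟨Finset.mem_univ _, by omega⟩
    have h1 : ((T.card : ℕ):ℝ) ≤ (((Finset.univ.filter (fun A : Finset (Fin n) => M < A.card)).card : ℕ):ℝ) := by
      exact_mod_cast Finset.card_le_card hsub
    have h2 : (((Finset.univ.filter (fun A : Finset (Fin n) => M < A.card)).card : ℕ):ℝ)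
        = ∑ A : Finset (Fin n), (if M < A.card then (1:ℝ) else 0) := by rw [Finset.sum_boole]
    have h3 : ∑ A : Finset (Fin n), (if M < A.card then (1:ℝ) else 0)
        = ∑ k ∈ Finset.range (n+1), (n.choose k : ℝ) * (if M < k then (1:ℝ) else 0) :=
      aux_card_sum n (fun k => if M < k then (1:ℝ) else 0)
    have h4 : ∑ k ∈ Finset.range (n+1), (n.choose k : ℝ) * (if M < k then (1:ℝ) else 0)
        ≤ ∑ k ∈ Finset.range (n+1), (ρ^n * 2^n : ℝ) := by
      apply Finset.sum_le_sum
      intro k hk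
      by_cases hMk : M < k
      · rw [if_pos hMk, mul_one]
        exact hkey k hk hMk
      · rw [if_neg hMk, mul_zero]
        positivity
    have h5 : ∑ _k ∈ Finset.range (n+1), (ρ^n * 2^n : ℝ) = ((n:ℝ)+1)*(ρ^n*2^n) := by
      rw [Finset.sum_const, Finset.card_range, nsmul_eq_mul]
      push_cast
      ring
    linarith
  have htailN : ∑ A ∈ T, ((A.card.choose m : ℝ) - c)^2
      ≤ (2*((n:ℝ)^m)^2*((n:ℝ)+1)*ρ^n) * ((F.card : ℕ):ℝ) := by
    have h1 : ∑ A ∈ T, ((A.card.choose m : ℝ) - c)^2 ≤ ((T.card : ℕ):ℝ) * ((n:ℝ)^m)^2 := by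
      have := Finset.sum_le_card_nsmul T (fun A => ((A.card.choose m : ℝ) - c)^2) (((n:ℝ)^m)^2) htailpt
      rwa [nsmul_eq_mul] at this
    have h2 : ((T.card : ℕ):ℝ) * ((n:ℝ)^m)^2 ≤ (((n:ℝ)+1) * (ρ^n * 2^n)) * ((n:ℝ)^m)^2 :=
      mul_le_mul_of_nonneg_right hTcount (by positivity)
    have h3 : (((n:ℝ)+1) * (ρ^n * 2^n)) * ((n:ℝ)^m)^2
        ≤ (((n:ℝ)+1) * (ρ^n * (2*((F.card : ℕ):ℝ)))) * ((n:ℝ)^m)^2 := by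
      gcongr
    calc ∑ A ∈ T, ((A.card.choose m : ℝ) - c)^2 ≤ ((T.card : ℕ):ℝ) * ((n:ℝ)^m)^2 := h1
      _ ≤ (((n:ℝ)+1) * (ρ^n * 2^n)) * ((n:ℝ)^m)^2 := h2
      _ ≤ (((n:ℝ)+1) * (ρ^n * (2*((F.card : ℕ):ℝ)))) * ((n:ℝ)^m)^2 := h3
      _ = (2*((n:ℝ)^m)^2*((n:ℝ)+1)*ρ^n) * ((F.card : ℕ):ℝ) := by ring
  have hpowm : ((n:ℝ)^m)^2 * (n:ℝ) = (n:ℝ)^(2*m+1) := by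
    rw [← pow_mul, ← pow_succ]
    congr 1
    omega
  have htailFinal : 2*((n:ℝ)^m)^2*((n:ℝ)+1)*ρ^n ≤ ε*(n:ℝ)^(2*m-1)/(m.factorial:ℝ)^2 := by
    have hb := hn₁ n hnn₁
    have hn1' : (n:ℝ)+1 ≤ 2*(n:ℝ) := by linarith
    have hA : 2*((n:ℝ)^m)^2*((n:ℝ)+1)*ρ^n ≤ 4*((n:ℝ)^(2*m+1)*ρ^n) := by
      calc 2*((n:ℝ)^m)^2*((n:ℝ)+1)*ρ^n = 2*ρ^n*((n:ℝ)^m)^2*((n:ℝ)+1) := by ring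
        _ ≤ 2*ρ^n*((n:ℝ)^m)^2*(2*(n:ℝ)) := by gcongr
        _ = 4*(((n:ℝ)^m)^2*(n:ℝ)*ρ^n) := by ring
        _ = 4*((n:ℝ)^(2*m+1)*ρ^n) := by rw [hpowm]
    have hε4 : 4*((n:ℝ)^(2*m+1)*ρ^n) ≤ ε/(m.factorial:ℝ)^2 := by
      have h4 : 4*(ε/(4*(m.factorial:ℝ)^2)) = ε/(m.factorial:ℝ)^2 := by
        field_simp
      nlinarith only [hb, h4]
    have hpow1 : (1:ℝ) ≤ (n:ℝ)^(2*m-1) := one_le_pow₀ hn1R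
    calc 2*((n:ℝ)^m)^2*((n:ℝ)+1)*ρ^n ≤ ε/(m.factorial:ℝ)^2 := le_trans hA hε4
      _ ≤ ε*(n:ℝ)^(2*m-1)/(m.factorial:ℝ)^2 := by
          apply (div_le_div_iff_of_pos_right hfac2).mpr
          nlinarith only [hpow1, hε]
  -- final assembly
  have hdivB : (∑ A ∈ B, ((A.card.choose m : ℝ) - c)^2) / ((F.card : ℕ):ℝ)
      ≤ L^2*((0.55:ℝ)*(n:ℝ)+6) := by
    rw [div_le_iff₀ hNpos]
    exact hbulkN
  have hdivT : (∑ A ∈ T, ((A.card.choose m : ℝ) - c)^2) / ((F.card : ℕ):ℝ)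
      ≤ 2*((n:ℝ)^m)^2*((n:ℝ)+1)*ρ^n := by
    rw [div_le_iff₀ hNpos]
    exact htailN
  calc (∑ A ∈ F, ((A.card.choose m : ℝ)) ^ 2) / ((F.card : ℕ):ℝ) -
        ((∑ A ∈ F, ((A.card.choose m : ℝ))) / ((F.card : ℕ):ℝ)) ^ 2
      ≤ (∑ A ∈ F, ((A.card.choose m : ℝ) - c) ^ 2) / ((F.card : ℕ):ℝ) := hvar
    _ = (∑ A ∈ B, ((A.card.choose m : ℝ) - c)^2) / ((F.card : ℕ):ℝ)
        + (∑ A ∈ T, ((A.card.choose m : ℝ) - c)^2) / ((F.card : ℕ):ℝ) := by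
        rw [hsplit, add_div]
    _ ≤ L^2*((0.55:ℝ)*(n:ℝ)+6) + 2*((n:ℝ)^m)^2*((n:ℝ)+1)*ρ^n := add_le_add hdivB hdivT
    _ ≤ (n:ℝ)^(2*m-1)/(m.factorial:ℝ)^2 + ε*(n:ℝ)^(2*m-1)/(m.factorial:ℝ)^2 :=
        add_le_add hbulkFinal htailFinal
    _ = (1 + ε) * (n:ℝ)^(2*m-1) / (m.factorial:ℝ)^2 := by ring
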